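/- Let Λ be a row-finite source-free k-graph, x ∈ Λ^∞, and H_x as above. Fix v ∈ Λ^0 and n ∈ ℕ^k. Then Σ_{λ ∈ vΛ^n} T_λ T_λ* = T_v on H_x: for every class [ξ^i_μ] with r(μ) = v there exists exactly one λ ∈ vΛ^n with T_λT_λ*[ξ^i_μ] = [ξ^i_μ], and T_λT_λ*[ξ^i_μ] = 0 for all other λ ∈ vΛ^n. -/

import Mathlib

open CategoryTheory
open scoped ENNReal BigOperators

noncomputable section
attribute [local instance] Classical.propDecidable

/-- A `k`-graph: a (small) category `Λ` together with a degree functor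
`d : Λ → ℕ^k` satisfying the unique factorization property.  A morphism
`f : v ⟶ w` is thought of as a path with range `v` and source `w`, and
composition `λμ` of composable paths is `λ ≫ μ`. -/
structure KGraph (k : ℕ) (Λ : Type) [SmallCategory Λ] where
  d : ∀ {u v : Λ}, (u ⟶ v) → (Fin k → ℕ)
  d_id : ∀ v : Λ, d (𝟙 v) = 0
  d_comp : ∀ {u v w : Λ} (f : u ⟶ v) (g : v ⟶ w), d (f ≫ g) = d f + d g
  factor : ∀ {u w : Λ} (f : u ⟶ w) (m n : Fin k → ℕ), d f = m + n →
    ∃! p : Σ v : Λ, (u ⟶ v) × (v ⟶ w),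
      d p.2.1 = m ∧ d p.2.2 = n ∧ p.2.1 ≫ p.2.2 = f

variable {Λ : Type} [SmallCategory Λ]

/-- The segment `x_i ⋯ x_{i+j−1}` of the fixed infinite path `x`. -/
def chainAux (v : ℕ → Λ) (x : ∀ i, v i ⟶ v (i + 1)) (i : ℕ) :
    ∀ j : ℕ, v i ⟶ v (i + j)
  | 0 => 𝟙 (v i)
  | j + 1 => chainAux v x i j ≫ x (i + j)

/-- The segment `x_i ⋯ x_{K−1}`, a morphism `v i ⟶ v K` for `i ≤ K`. -/
def chain (v : ℕ → Λ) (x : ∀ i, v i ⟶ v (i + 1)) (i K : ℕ) (h : i ≤ K) :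
    v i ⟶ v K :=
  chainAux v x i (K - i) ≫ eqToHom (congrArg v (Nat.add_sub_cancel' h))

/-- Indices of basis vectors `ξ^i_μ` with `μ ∈ F_i = Λ v_i`. -/
def Node (v : ℕ → Λ) : Type := Σ (i : ℕ) (u : Λ), (u ⟶ v i)

/-- The identification defining the inductive limit `H_x`. -/
def nodeRel (v : ℕ → Λ) (x : ∀ i, v i ⟶ v (i + 1)) (a b : Node v) : Prop :=
  ∃ (K : ℕ) (ha : a.1 ≤ K) (hb : b.1 ≤ K),
    (⟨a.2.1, a.2.2 ≫ chain v x a.1 K ha⟩ : Σ u : Λ, (u ⟶ v K)) =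
      ⟨b.2.1, b.2.2 ≫ chain v x b.1 K hb⟩

/-- The inductive limit Hilbert space `H_x = lim_→ ℓ²(F_i)`. -/
abbrev Hx (v : ℕ → Λ) (x : ∀ i, v i ⟶ v (i + 1)) : Type :=
  lp (fun _ : Quot (nodeRel v x) => ℂ) 2

/-- The basis vector `[ξ^i_μ]` of `H_x`. -/
def xi (v : ℕ → Λ) (x : ∀ i, v i ⟶ v (i + 1))
    (i : ℕ) (u : Λ) (μ : u ⟶ v i) : Hx v x :=
  lp.single 2 (Quot.mk (nodeRel v x) ⟨i, u, μ⟩) (1 : ℂ)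
section ChainLemmas

variable {Λ : Type} [SmallCategory Λ] (v : ℕ → Λ) (x : ∀ i, v i ⟶ v (i + 1))

lemma chainAux_congr (i : ℕ) {a b : ℕ} (h : a = b) :
    chainAux v x i a = chainAux v x i b ≫ eqToHom (by rw [h]) := by
  subst h; simp

lemma chain_self (i : ℕ) : chain v x i i le_rfl = 𝟙 (v i) := by
  rw [chain, chainAux_congr v x i (Nat.sub_self i)]
  simp [chainAux]

lemma chain_eq {i K : ℕ} (h h' : i ≤ K) : chain v x i K h = chain v x i K h' := rfl

lemma x_eqToHom {m K : ℕ} (h : m = K) :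
    x m ≫ eqToHom (congrArg v (congrArg Nat.succ h)) = eqToHom (congrArg v h) ≫ x K := by
  subst h; simp

lemma chain_succ {i K : ℕ} (h : i ≤ K) :
    chain v x i (K + 1) (h.trans (Nat.le_succ K)) = chain v x i K h ≫ x K := by
  have hs : K + 1 - i = (K - i) + 1 := by omega
  have hK : i + (K - i) = K := Nat.add_sub_cancel' h
  rw [chain, chainAux_congr v x i hs]
  simp only [chainAux, Category.assoc]
  rw [chain]
  simp only [Category.assoc]
  congr 1
  rw [eqToHom_trans]
  have := x_eqToHom v x hK
  convert this using 2

lemma chain_comp {i j K : ℕ} (hij : i ≤ j) (hjK : j ≤ K) :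
    chain v x i j hij ≫ chain v x j K hjK = chain v x i K (hij.trans hjK) := by
  induction K with
  | zero =>
      have : j = 0 := Nat.le_zero.mp hjK
      subst this
      have : i = 0 := Nat.le_zero.mp hij
      subst this
      simp [chain_self]
  | succ K ih =>
      rcases Nat.lt_or_ge j (K + 1) with hlt | hge
      · have hjK' : j ≤ K := Nat.lt_succ_iff.mp hlt
        rw [chain_succ v x hjK', chain_succ v x (hij.trans hjK'), ← Category.assoc,
          ih hjK']
      · have : j = K + 1 := le_antisymm hjK hge
        subst this
        rw [chain_self]
        simp

end ChainLemmas

section DegreeLemmas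

variable {Λ : Type} [SmallCategory Λ] {k : ℕ} (G : KGraph k Λ)
  (v : ℕ → Λ) (x : ∀ i, v i ⟶ v (i + 1))

lemma d_eqToHom {a b : Λ} (h : a = b) : G.d (eqToHom h) = 0 := by
  subst h; simpa using G.d_id a

lemma d_chainAux (hx : ∀ i, G.d (x i) = fun _ => 1) (i : ℕ) :
    ∀ a : ℕ, G.d (chainAux v x i a) = fun _ => a
  | 0 => by simpa [chainAux, Pi.zero_def] using G.d_id (v i)
  | a + 1 => by
      rw [chainAux, G.d_comp, d_chainAux hx i a, hx]
      funext c; simp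

lemma d_chain (hx : ∀ i, G.d (x i) = fun _ => 1) {i K : ℕ} (h : i ≤ K) :
    G.d (chain v x i K h) = fun _ => K - i := by
  rw [chain, G.d_comp, d_chainAux G v x hx, d_eqToHom, add_zero]

end DegreeLemmas

section NodeRelLemmas

variable {Λ : Type} [SmallCategory Λ] (v : ℕ → Λ) (x : ∀ i, v i ⟶ v (i + 1))

lemma nodeRel_push {a b : Node v} {K K' : ℕ} (hK : K ≤ K')
    (ha : a.1 ≤ K) (hb : b.1 ≤ K)
    (h : (⟨a.2.1, a.2.2 ≫ chain v x a.1 K ha⟩ : Σ u : Λ, (u ⟶ v K)) =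
      ⟨b.2.1, b.2.2 ≫ chain v x b.1 K hb⟩) :
    (⟨a.2.1, a.2.2 ≫ chain v x a.1 K' (ha.trans hK)⟩ : Σ u : Λ, (u ⟶ v K')) =
      ⟨b.2.1, b.2.2 ≫ chain v x b.1 K' (hb.trans hK)⟩ := by
  have := congrArg (fun s : Σ u : Λ, (u ⟶ v K) =>
    (⟨s.1, s.2 ≫ chain v x K K' hK⟩ : Σ u : Λ, (u ⟶ v K'))) h
  simpa [Category.assoc, chain_comp] using this

lemma nodeRel_equivalence : Equivalence (nodeRel v x) := by
  constructor
  · intro a; exact ⟨a.1, le_rfl, le_rfl, rfl⟩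
  · rintro a b ⟨K, ha, hb, h⟩; exact ⟨K, hb, ha, h.symm⟩
  · rintro a b c ⟨K₁, ha, hb, h₁⟩ ⟨K₂, hb', hc, h₂⟩
    refine ⟨max K₁ K₂, ha.trans (le_max_left _ _), hc.trans (le_max_right _ _), ?_⟩
    have e₁ := nodeRel_push v x (le_max_left K₁ K₂) ha hb h₁
    have e₂ := nodeRel_push v x (le_max_right K₁ K₂) hb' hc h₂
    exact e₁.trans e₂

lemma quot_mk_eq_iff (a b : Node v) :
    Quot.mk (nodeRel v x) a = Quot.mk (nodeRel v x) b ↔ nodeRel v x a b :=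
  ⟨fun h => ((nodeRel_equivalence v x).eqvGen_iff).mp (Quot.eqvGen_exact h),
   fun h => Quot.sound h⟩

lemma quot_mk_eq_of_push {i j K : ℕ} (hi : i ≤ K) (hj : j ≤ K) {u : Λ}
    (μ : u ⟶ v i) (ν : u ⟶ v j)
    (h : μ ≫ chain v x i K hi = ν ≫ chain v x j K hj) :
    Quot.mk (nodeRel v x) ⟨i, u, μ⟩ = Quot.mk (nodeRel v x) ⟨j, u, ν⟩ :=
  Quot.sound ⟨K, hi, hj, by rw [h]⟩

/-- The range vertex is a class invariant. -/
lemma fst_eq_of_quot_eq {i j : ℕ} {u u' : Λ} {μ : u ⟶ v i} {ν : u' ⟶ v j}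
    (h : Quot.mk (nodeRel v x) ⟨i, u, μ⟩ = Quot.mk (nodeRel v x) ⟨j, u', ν⟩) :
    u = u' := by
  obtain ⟨K, hi, hj, hs⟩ := (quot_mk_eq_iff v x _ _).mp h
  exact congrArg Sigma.fst hs

end NodeRelLemmas

section HilbertLemmas

variable {ι : Type} -- generic index

local notation "ℓ²(" ι ")" => lp (fun _ : ι => ℂ) 2

lemma inner_single_single (q q' : ι) :
    (inner ℂ (lp.single 2 q (1:ℂ) : ℓ²(ι)) (lp.single 2 q' (1:ℂ)) : ℂ) =
      if q' = q then 1 else 0 := by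
  rw [lp.inner_single_left]
  rcases eq_or_ne q' q with h | h
  · subst h; rw [lp.single_apply_self]; simp
  · rw [lp.single_apply_ne _ _ _ (fun hh => h hh.symm)]; simp [h]

lemma single_eval (q : ι) (f : ℓ²(ι)) :
    f q = inner ℂ (lp.single 2 q (1:ℂ) : ℓ²(ι)) f := by
  rw [lp.inner_single_left]; simp

lemma single_ne_zero' (q : ι) : (lp.single 2 q (1:ℂ) : ℓ²(ι)) ≠ 0 := by
  intro h
  have := congrArg (fun f : ℓ²(ι) => (f : ∀ _ : ι, ℂ) q) h
  simp only [lp.single_apply_self] at this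
  simpa using this

lemma clm_ext_single (A B : ℓ²(ι) →L[ℂ] ℓ²(ι))
    (h : ∀ q : ι, A (lp.single 2 q (1:ℂ)) = B (lp.single 2 q (1:ℂ))) : A = B := by
  refine ContinuousLinearMap.ext fun f => ?_
  have hs := lp.hasSum_single (E := fun _ : ι => ℂ) (p := 2) (by norm_num) f
  have hA := hs.mapL A
  have hB := hs.mapL B
  have : (fun q : ι => A (lp.single 2 q (f q))) = fun q => B (lp.single 2 q (f q)) := by
    funext q
    have h1 : lp.single (E := fun _ : ι => ℂ) 2 q (f q) = f q • lp.single 2 q (1:ℂ) := by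
      rw [← lp.single_smul]; norm_num
    rw [h1, map_smul, map_smul, h]
  rw [this] at hA
  exact hA.unique hB

lemma adjoint_coord (A : ℓ²(ι) →L[ℂ] ℓ²(ι)) (f : ℓ²(ι)) (q : ι) :
    (ContinuousLinearMap.adjoint A f) q = inner ℂ (A (lp.single 2 q (1:ℂ))) f := by
  rw [single_eval, ContinuousLinearMap.adjoint_inner_right]

end HilbertLemmas

section Main

variable {Λ : Type} [SmallCategory Λ] {k : ℕ} (G : KGraph k Λ)
  (v : ℕ → Λ) (x : ∀ i, v i ⟶ v (i + 1))

lemma xi_ne_zero (i : ℕ) (u : Λ) (μ : u ⟶ v i) : xi v x i u μ ≠ 0 :=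
  single_ne_zero' _

lemma key_forward {n : Fin k → ℕ}
    {v₀ b c : Λ} (lam : v₀ ⟶ b) (hdlam : G.d lam = n)
    {i j : ℕ} (hij : i ≤ j) (μ : v₀ ⟶ v i) (lam' : v₀ ⟶ c) (hdlam' : G.d lam' = n)
    (ν : c ⟶ v j) (hfac : lam' ≫ ν = μ ≫ chain v x i j hij)
    {j' : ℕ} {u' : Λ} (ν' : u' ⟶ v j') (hb : b = u')
    (hcl : Quot.mk (nodeRel v x) ⟨j', v₀, lam ≫ eqToHom hb ≫ ν'⟩ =
      Quot.mk (nodeRel v x) ⟨i, v₀, μ⟩) :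
    (⟨b, lam⟩ : Σ u : Λ, (v₀ ⟶ u)) = ⟨c, lam'⟩ ∧
      Quot.mk (nodeRel v x) (⟨j', u', ν'⟩ : Node v) = Quot.mk (nodeRel v x) ⟨j, c, ν⟩ := by
  subst hb
  simp only [eqToHom_refl, Category.id_comp] at hcl
  obtain ⟨K, hj'K, hiK, hs⟩ := (quot_mk_eq_iff v x _ _).mp hcl
  dsimp only at hs hj'K hiK
  simp only [Sigma.mk.inj_iff] at hs
  have hmor : (lam ≫ ν') ≫ chain v x j' K hj'K = μ ≫ chain v x i K hiK :=
    eq_of_heq hs.2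
  have hKK' : K ≤ max K j := le_max_left _ _
  have hjK' : j ≤ max K j := le_max_right _ _
  have hiK' : i ≤ max K j := le_trans hiK hKK'
  have hj'K' : j' ≤ max K j := le_trans hj'K hKK'
  have hmor1 : lam ≫ (ν' ≫ chain v x j' (max K j) hj'K') =
      μ ≫ chain v x i (max K j) hiK' := by
    have := congrArg (· ≫ chain v x K (max K j) hKK') hmor
    simp only [Category.assoc, chain_comp] at this
    exact this
  have hmor2 : lam' ≫ (ν ≫ chain v x j (max K j) hjK') =
      μ ≫ chain v x i (max K j) hiK' := by
    rw [← Category.assoc, hfac, Category.assoc, chain_comp]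
  have hdF : G.d (μ ≫ chain v x i (max K j) hiK') =
      n + G.d (ν ≫ chain v x j (max K j) hjK') := by
    rw [← hmor2, G.d_comp, hdlam']
  obtain ⟨P, hP, huniq⟩ := G.factor (μ ≫ chain v x i (max K j) hiK') n
    (G.d (ν ≫ chain v x j (max K j) hjK')) hdF
  have hd2 : G.d (ν' ≫ chain v x j' (max K j) hj'K') =
      G.d (ν ≫ chain v x j (max K j) hjK') := by
    have e1 : G.d (μ ≫ chain v x i (max K j) hiK') =
        n + G.d (ν' ≫ chain v x j' (max K j) hj'K') := by
      rw [← hmor1, G.d_comp, hdlam]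
    exact add_left_cancel (e1.symm.trans hdF)
  have h1 := huniq ⟨b, lam, ν' ≫ chain v x j' (max K j) hj'K'⟩ ⟨hdlam, hd2, hmor1⟩
  have h2 := huniq ⟨c, lam', ν ≫ chain v x j (max K j) hjK'⟩ ⟨hdlam', rfl, hmor2⟩
  have h12 := h1.trans h2.symm
  simp only [Sigma.mk.inj_iff] at h12
  obtain ⟨hfst, hsnd⟩ := h12
  subst hfst
  have hpair := eq_of_heq hsnd
  have hl : lam = lam' := congrArg Prod.fst hpair
  have hr : ν' ≫ chain v x j' (max K j) hj'K' = ν ≫ chain v x j (max K j) hjK' :=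
    congrArg Prod.snd hpair
  exact ⟨by rw [hl], quot_mk_eq_of_push v x hj'K' hjK' ν' ν hr⟩

end Main

section Adj

variable {Λ : Type} [SmallCategory Λ] {k : ℕ} (G : KGraph k Λ)
  (v : ℕ → Λ) (x : ∀ i, v i ⟶ v (i + 1))
  (T : ∀ {a b : Λ}, (a ⟶ b) → (Hx v x →L[ℂ] Hx v x))
  (hT : ∀ {a b : Λ} (lam : a ⟶ b) (i : ℕ) (u : Λ) (μ : u ⟶ v i),
      T lam (xi v x i u μ) =
        if h : b = u then xi v x i a (lam ≫ eqToHom h ≫ μ) else 0)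

include hT

lemma adj_zero {v₀ b : Λ} (lam : v₀ ⟶ b) {i : ℕ} {u : Λ} (μ : u ⟶ v i)
    (hu : u ≠ v₀) :
    ContinuousLinearMap.adjoint (T lam) (xi v x i u μ) = 0 := by
  refine lp.ext (funext fun q => ?_)
  obtain ⟨⟨j', u', ν'⟩, rfl⟩ := Quot.exists_rep q
  have hL := adjoint_coord (T lam) (xi v x i u μ) (Quot.mk (nodeRel v x) ⟨j', u', ν'⟩)
  rw [show (lp.single 2 (Quot.mk (nodeRel v x) ⟨j', u', ν'⟩) (1:ℂ) : Hx v x)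
      = xi v x j' u' ν' from rfl, hT] at hL
  rw [hL]
  have h0 : ((0 : Hx v x) : ∀ _, ℂ) (Quot.mk (nodeRel v x) ⟨j', u', ν'⟩) = 0 := rfl
  rw [h0]
  by_cases hb : b = u'
  · rw [dif_pos hb]
    have hinner : (inner ℂ (xi v x j' v₀ (lam ≫ eqToHom hb ≫ ν')) (xi v x i u μ) : ℂ)
        = if Quot.mk (nodeRel v x) ⟨i, u, μ⟩ =
            Quot.mk (nodeRel v x) ⟨j', v₀, lam ≫ eqToHom hb ≫ ν'⟩ then 1 else 0 :=
      inner_single_single _ _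
    rw [hinner, if_neg]
    intro hq
    exact hu (fst_eq_of_quot_eq v x hq)
  · rw [dif_neg hb, inner_zero_left]

lemma adj_main {n : Fin k → ℕ} {v₀ b c : Λ} (lam : v₀ ⟶ b) (hdlam : G.d lam = n)
    {i j : ℕ} (hij : i ≤ j) (μ : v₀ ⟶ v i) (lam' : v₀ ⟶ c) (hdlam' : G.d lam' = n)
    (ν : c ⟶ v j) (hfac : lam' ≫ ν = μ ≫ chain v x i j hij) :
    ContinuousLinearMap.adjoint (T lam) (xi v x i v₀ μ) =
      if h : (⟨b, lam⟩ : Σ u : Λ, (v₀ ⟶ u)) = ⟨c, lam'⟩ then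
        xi v x j b (eqToHom (congrArg Sigma.fst h) ≫ ν) else 0 := by
  by_cases h : (⟨b, lam⟩ : Σ u : Λ, (v₀ ⟶ u)) = ⟨c, lam'⟩
  · rw [dif_pos h]
    have hbc : b = c := congrArg Sigma.fst h
    subst hbc
    have hl : lam = lam' := by
      simp only [Sigma.mk.inj_iff, heq_eq_eq] at h; exact h.2
    subst hl
    refine lp.ext (funext fun q => ?_)
    obtain ⟨⟨j', u', ν'⟩, rfl⟩ := Quot.exists_rep q
    have hL := adjoint_coord (T lam) (xi v x i v₀ μ) (Quot.mk (nodeRel v x) ⟨j', u', ν'⟩)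
    rw [show (lp.single 2 (Quot.mk (nodeRel v x) ⟨j', u', ν'⟩) (1:ℂ) : Hx v x)
        = xi v x j' u' ν' from rfl, hT] at hL
    rw [hL]
    have hR : (xi v x j b (eqToHom (congrArg Sigma.fst h) ≫ ν) : ∀ _, ℂ)
        (Quot.mk (nodeRel v x) ⟨j', u', ν'⟩)
        = if Quot.mk (nodeRel v x) (⟨j', u', ν'⟩ : Node v) =
            Quot.mk (nodeRel v x) ⟨j, b, eqToHom (congrArg Sigma.fst h) ≫ ν⟩
          then 1 else 0 := by
      simp only [xi, lp.single_apply]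
      split_ifs with h1
      · rw [h1]; exact Pi.single_eq_same _ _
      · exact Pi.single_eq_of_ne h1 _
    rw [hR]
    have hE : eqToHom (congrArg Sigma.fst h) ≫ ν = ν := by simp
    by_cases hb : b = u'
    · rw [dif_pos hb]
      have hinner : (inner ℂ (xi v x j' v₀ (lam ≫ eqToHom hb ≫ ν')) (xi v x i v₀ μ) : ℂ)
          = if Quot.mk (nodeRel v x) ⟨i, v₀, μ⟩ =
              Quot.mk (nodeRel v x) ⟨j', v₀, lam ≫ eqToHom hb ≫ ν'⟩ then 1 else 0 :=
        inner_single_single _ _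
      rw [hinner]
      by_cases hcl : Quot.mk (nodeRel v x) (⟨j', v₀, lam ≫ eqToHom hb ≫ ν'⟩ : Node v) =
          Quot.mk (nodeRel v x) ⟨i, v₀, μ⟩
      · rw [if_pos hcl.symm, if_pos]
        have := (key_forward G v x lam hdlam hij μ lam hdlam' ν hfac ν' hb hcl).2
        rw [hE]
        exact this
      · rw [if_neg (fun hh => hcl hh.symm), if_neg]
        intro hq
        rw [hE] at hq
        -- from hq derive hcl
        apply hcl
        -- reconstruct: from hq : mk ⟨j',u',ν'⟩ = mk ⟨j,b,ν⟩ build class eq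
        subst hb
        obtain ⟨K, hj'K, hjK, hs⟩ := (quot_mk_eq_iff v x _ _).mp hq
        dsimp only at hs hj'K hjK
        simp only [Sigma.mk.inj_iff, heq_eq_eq] at hs
        have hr : ν' ≫ chain v x j' K hj'K = ν ≫ chain v x j K hjK := hs.2
        have hKK' : K ≤ max K i := le_max_left _ _
        have hiK' : i ≤ max K i := le_max_right _ _
        have hj'K' : j' ≤ max K i := le_trans hj'K hKK'
        have hjK'' : j ≤ max K i := le_trans hjK hKK'
        refine quot_mk_eq_of_push v x hj'K' hiK' _ _ ?_
        have h1 := congrArg (fun g => lam ≫ g ≫ chain v x K (max K i) hKK') hr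
        simp only [Category.assoc, chain_comp] at h1
        simp only [eqToHom_refl, Category.id_comp, Category.assoc]
        rw [h1, ← Category.assoc, hfac, Category.assoc, chain_comp]
    · rw [dif_neg hb, inner_zero_left, if_neg]
      intro hq
      exact hb ((fst_eq_of_quot_eq v x hq).symm)
  · rw [dif_neg h]
    refine lp.ext (funext fun q => ?_)
    obtain ⟨⟨j', u', ν'⟩, rfl⟩ := Quot.exists_rep q
    have hL := adjoint_coord (T lam) (xi v x i v₀ μ) (Quot.mk (nodeRel v x) ⟨j', u', ν'⟩)
    rw [show (lp.single 2 (Quot.mk (nodeRel v x) ⟨j', u', ν'⟩) (1:ℂ) : Hx v x)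
        = xi v x j' u' ν' from rfl, hT] at hL
    rw [hL]
    have h0 : ((0 : Hx v x) : ∀ _, ℂ) (Quot.mk (nodeRel v x) ⟨j', u', ν'⟩) = 0 := rfl
    rw [h0]
    by_cases hb : b = u'
    · rw [dif_pos hb]
      have hinner : (inner ℂ (xi v x j' v₀ (lam ≫ eqToHom hb ≫ ν')) (xi v x i v₀ μ) : ℂ)
          = if Quot.mk (nodeRel v x) ⟨i, v₀, μ⟩ =
              Quot.mk (nodeRel v x) ⟨j', v₀, lam ≫ eqToHom hb ≫ ν'⟩ then 1 else 0 :=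
        inner_single_single _ _
      rw [hinner, if_neg]
      intro hq
      exact h (key_forward G v x lam hdlam hij μ lam' hdlam' ν hfac ν' hb hq.symm).1
    · rw [dif_neg hb, inner_zero_left]

end Adj

section TT

variable {Λ : Type} [SmallCategory Λ] {k : ℕ} (G : KGraph k Λ)
  (v : ℕ → Λ) (x : ∀ i, v i ⟶ v (i + 1))
  (T : ∀ {a b : Λ}, (a ⟶ b) → (Hx v x →L[ℂ] Hx v x))
  (hT : ∀ {a b : Λ} (lam : a ⟶ b) (i : ℕ) (u : Λ) (μ : u ⟶ v i),
      T lam (xi v x i u μ) =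
        if h : b = u then xi v x i a (lam ≫ eqToHom h ≫ μ) else 0)

include hT

lemma TT_xi {n : Fin k → ℕ} {v₀ b c : Λ} (lam : v₀ ⟶ b) (hdlam : G.d lam = n)
    {i j : ℕ} (hij : i ≤ j) (μ : v₀ ⟶ v i) (lam' : v₀ ⟶ c) (hdlam' : G.d lam' = n)
    (ν : c ⟶ v j) (hfac : lam' ≫ ν = μ ≫ chain v x i j hij) :
    T lam (ContinuousLinearMap.adjoint (T lam) (xi v x i v₀ μ)) =
      if (⟨b, lam⟩ : Σ u : Λ, (v₀ ⟶ u)) = ⟨c, lam'⟩ then xi v x i v₀ μ else 0 := by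
  rw [adj_main G v x T hT lam hdlam hij μ lam' hdlam' ν hfac]
  by_cases h : (⟨b, lam⟩ : Σ u : Λ, (v₀ ⟶ u)) = ⟨c, lam'⟩
  · rw [dif_pos h, if_pos h]
    have hbc : b = c := congrArg Sigma.fst h
    subst hbc
    have hl : lam = lam' := by
      simp only [Sigma.mk.inj_iff, heq_eq_eq] at h; exact h.2
    subst hl
    rw [hT]
    rw [dif_pos rfl]
    have hE : lam ≫ eqToHom rfl ≫ eqToHom (congrArg Sigma.fst h) ≫ ν = lam ≫ ν := by
      simp
    rw [hE]
    have hq : Quot.mk (nodeRel v x) (⟨j, v₀, lam ≫ ν⟩ : Node v)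
        = Quot.mk (nodeRel v x) ⟨i, v₀, μ⟩ := by
      refine (quot_mk_eq_of_push v x hij le_rfl μ (lam ≫ ν) ?_).symm
      rw [chain_self]
      simp [hfac]
    simp only [xi]
    rw [hq]
  · rw [dif_neg h, if_neg h, map_zero]

end TT

/-- The Cuntz–Krieger relation `∑_{λ ∈ vΛⁿ} T_λ T_λ* = T_v` on `H_x`, for a
row-finite `k`-graph: for every class `[ξ^i_μ]` with `r(μ) = v` there is
exactly one `λ ∈ vΛⁿ` with `T_λ T_λ* [ξ^i_μ] = [ξ^i_μ]`, and `T_λ T_λ*`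
kills `[ξ^i_μ]` for all other `λ ∈ vΛⁿ`. -/
theorem sum_T_lambda_T_lambda_star
    {k : ℕ} (G : KGraph k Λ)
    (rowFinite : ∀ (a : Λ) (n : Fin k → ℕ),
      Finite (Σ u : Λ, {f : a ⟶ u // G.d f = n}))
    (v : ℕ → Λ) (x : ∀ i, v i ⟶ v (i + 1))
    (hx : ∀ i, G.d (x i) = fun _ => 1)
    (T : ∀ {a b : Λ}, (a ⟶ b) → (Hx v x →L[ℂ] Hx v x))
    (hT : ∀ {a b : Λ} (lam : a ⟶ b) (i : ℕ) (u : Λ) (μ : u ⟶ v i),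
      T lam (xi v x i u μ) =
        if h : b = u then xi v x i a (lam ≫ eqToHom h ≫ μ) else 0) :
    ∀ (v₀ : Λ) (n : Fin k → ℕ),
      (∑ᶠ p : Σ u : Λ, {f : v₀ ⟶ u // G.d f = n},
          (T p.2.1).comp (ContinuousLinearMap.adjoint (T p.2.1))) = T (𝟙 v₀) ∧
      ∀ (i : ℕ) (μ : v₀ ⟶ v i),
        (∃! p : Σ u : Λ, {f : v₀ ⟶ u // G.d f = n},
          (T p.2.1) (ContinuousLinearMap.adjoint (T p.2.1) (xi v x i v₀ μ)) =
            xi v x i v₀ μ) ∧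
        ∀ p : Σ u : Λ, {f : v₀ ⟶ u // G.d f = n},
          (T p.2.1) (ContinuousLinearMap.adjoint (T p.2.1) (xi v x i v₀ μ)) ≠
              xi v x i v₀ μ →
            (T p.2.1) (ContinuousLinearMap.adjoint (T p.2.1) (xi v x i v₀ μ)) = 0 := by

  intro v₀ n
  classical
  have main : ∀ (i : ℕ) (μ : v₀ ⟶ v i), ∃ (c : Λ) (lam' : v₀ ⟶ c)
      (hd : G.d lam' = n),
      ∀ (b : Λ) (lam : v₀ ⟶ b), G.d lam = n →
        T lam (ContinuousLinearMap.adjoint (T lam) (xi v x i v₀ μ)) =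
          if (⟨b, lam⟩ : Σ u : Λ, (v₀ ⟶ u)) = ⟨c, lam'⟩ then xi v x i v₀ μ else 0 := by
    intro i μ
    have hij : i ≤ i + ∑ c, n c := Nat.le_add_right _ _
    have hdf : G.d (μ ≫ chain v x i (i + ∑ c, n c) hij) =
        n + fun c => G.d μ c + (∑ c', n c') - n c := by
      rw [G.d_comp, d_chain G v x hx hij]
      funext c
      have hnc : n c ≤ ∑ c', n c' := Finset.single_le_sum (fun _ _ => Nat.zero_le _)
        (Finset.mem_univ c)
      simp only [Pi.add_apply]
      omega
    obtain ⟨⟨c, lam', ν⟩, ⟨hd1, hd2, hfacc⟩, _⟩ :=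
      G.factor (μ ≫ chain v x i (i + ∑ c, n c) hij) n _ hdf
    exact ⟨c, lam', hd1, fun b lam hdl =>
      TT_xi G v x T hT lam hdl hij μ lam' hd1 ν hfacc⟩
  constructor
  · -- the operator identity
    have : Fintype (Σ u : Λ, {f : v₀ ⟶ u // G.d f = n}) :=
      @Fintype.ofFinite _ (rowFinite v₀ n)
    rw [finsum_eq_sum_of_fintype]
    apply clm_ext_single
    intro q
    obtain ⟨⟨i, u, μ⟩, rfl⟩ := Quot.exists_rep q
    rw [show (lp.single 2 (Quot.mk (nodeRel v x) ⟨i, u, μ⟩) (1:ℂ) : Hx v x)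
        = xi v x i u μ from rfl]
    rw [ContinuousLinearMap.sum_apply]
    simp only [ContinuousLinearMap.comp_apply]
    by_cases hu : u = v₀
    · subst hu
      obtain ⟨c, lam', hd, hTT⟩ := main i μ
      have hterm : ∀ p : Σ w : Λ, {f : u ⟶ w // G.d f = n},
          T (p.2 : u ⟶ p.1) (ContinuousLinearMap.adjoint (T (p.2 : u ⟶ p.1))
              (xi v x i u μ)) =
            if p = ⟨c, lam', hd⟩ then xi v x i u μ else 0 := by
        rintro ⟨b, lam, hdl⟩
        rw [hTT b lam hdl]
        by_cases hc : (⟨b, lam⟩ : Σ w : Λ, (u ⟶ w)) = ⟨c, lam'⟩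
        · rw [if_pos hc, if_pos]
          have hbc : b = c := congrArg Sigma.fst hc
          subst hbc
          have hl : lam = lam' := by
            simp only [Sigma.mk.inj_iff, heq_eq_eq] at hc; exact hc.2
          subst hl
          rfl
        · rw [if_neg hc, if_neg]
          intro hp
          apply hc
          exact congrArg (fun s : Σ w : Λ, {f : u ⟶ w // G.d f = n} =>
            (⟨s.1, (s.2 : u ⟶ s.1)⟩ : Σ w : Λ, (u ⟶ w))) hp
      rw [Finset.sum_congr rfl fun p _ => hterm p, Finset.sum_ite_eq']
      rw [if_pos (Finset.mem_univ _), hT, dif_pos rfl]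
      simp
    · have hterm : ∀ p : Σ w : Λ, {f : v₀ ⟶ w // G.d f = n},
          T (p.2 : v₀ ⟶ p.1) (ContinuousLinearMap.adjoint (T (p.2 : v₀ ⟶ p.1))
              (xi v x i u μ)) = 0 := by
        rintro ⟨b, lam, hdl⟩
        rw [adj_zero v x T hT lam μ hu, map_zero]
      rw [Finset.sum_congr rfl fun p _ => hterm p, Finset.sum_const_zero]
      rw [hT, dif_neg (fun hh => hu hh.symm)]
  · intro i μ
    obtain ⟨c, lam', hd, hTT⟩ := main i μ
    constructor
    · refine ⟨⟨c, lam', hd⟩, ?_, ?_⟩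
      · show T lam' (ContinuousLinearMap.adjoint (T lam') (xi v x i v₀ μ)) = xi v x i v₀ μ
        rw [hTT c lam' hd, if_pos rfl]
      · rintro ⟨b, lam, hdl⟩ hp
        simp only at hp
        have hv := hTT b lam hdl
        by_cases hc : (⟨b, lam⟩ : Σ w : Λ, (v₀ ⟶ w)) = ⟨c, lam'⟩
        · have hbc : b = c := congrArg Sigma.fst hc
          subst hbc
          have hl : lam = lam' := by
            simp only [Sigma.mk.inj_iff, heq_eq_eq] at hc; exact hc.2
          subst hl
          rfl
        · rw [if_neg hc] at hv
          rw [hv] at hp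
          exact absurd hp.symm (xi_ne_zero v x i v₀ μ)
    · rintro ⟨b, lam, hdl⟩ hne
      have hv := hTT b lam hdl
      by_cases hc : (⟨b, lam⟩ : Σ w : Λ, (v₀ ⟶ w)) = ⟨c, lam'⟩
      · rw [if_pos hc] at hv
        exact absurd hv hne
      · rw [if_neg hc] at hv
        exact hv
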